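/- Let U ⊆ ℝ^d be open and connected, and let c : ℝ≥0 → ℝ and u : ℝ≥0 → ℝ^d be twice continuously differentiable functions such that c(x) + ⟨z, u(x)⟩ < 1 for all x ≥ 0 and all z ∈ U. Let M be the linear-rational family of functions M := { x ↦ (c′(x) + ⟨z, u′(x)⟩) / (1 − c(x) − ⟨z, u(x)⟩) : z ∈ U }. Let h₀, h₁ : ℝ≥0 → ℝ be continuous functions such that for every t ≥ 0 the function h₀ + t·h₁ belongs to M. Then h₁ is identically zero. -/

import Mathlib

open scoped RealInnerProductSpace

open intervalIntegral MeasureTheory in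
lemma my_ftc (f : ℝ → ℝ) (hf : ContinuousOn f (Set.Ici 0)) (x : ℝ) (hx : x ∈ Set.Ici 0) :
    HasDerivWithinAt (fun y => ∫ s in (0:ℝ)..y, f s) (f x) (Set.Ici 0) x := by
  have hint : IntervalIntegrable f volume 0 x := by
    apply ContinuousOn.intervalIntegrable
    rw [Set.uIcc_of_le hx]
    exact hf.mono Set.Icc_subset_Ici_self
  rcases eq_or_lt_of_le (Set.mem_Ici.mp hx) with h0 | hpos
  · subst h0
    exact integral_hasDerivWithinAt_right (t := Set.Ioi 0) hint
      ((hf.stronglyMeasurableAtFilter_nhdsWithin measurableSet_Ici 0).filter_mono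
        (nhdsWithin_mono _ Set.Ioi_subset_Ici_self))
      ((hf 0 hx).mono Set.Ioi_subset_Ici_self)
  · have hmem : Set.Ici (0:ℝ) ∈ nhds x :=
      Filter.mem_of_superset (Ioi_mem_nhds hpos) Set.Ioi_subset_Ici_self
    have : HasDerivAt (fun y => ∫ s in (0:ℝ)..y, f s) (f x) x :=
      integral_hasDerivAt_right hint
        ⟨Set.Ici 0, hmem, hf.aestronglyMeasurable measurableSet_Ici⟩
        (hf.continuousAt hmem)
    exact this.hasDerivWithinAt

lemma my_const (F : ℝ → ℝ) (hF : ∀ x ∈ Set.Ici (0:ℝ), HasDerivWithinAt F 0 (Set.Ici 0) x)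
    (x : ℝ) (hx : x ∈ Set.Ici (0:ℝ)) : F x = F 0 := by
  apply (convex_Ici (0:ℝ)).is_const_of_fderivWithin_eq_zero
    (fun y hy => (hF y hy).differentiableWithinAt)
    (fun y hy => ?_) hx Set.self_mem_Ici
  have := (hF y hy).hasFDerivWithinAt.fderivWithin (uniqueDiffOn_Ici 0 y hy)
  rw [this]; ext; simp

lemma my_ode (D φ G : ℝ → ℝ)
    (hD : ∀ x ∈ Set.Ici (0:ℝ), HasDerivWithinAt D (-(φ x * D x)) (Set.Ici 0) x)
    (hpos : ∀ x ∈ Set.Ici (0:ℝ), 0 < D x)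
    (hG : ∀ x ∈ Set.Ici (0:ℝ), HasDerivWithinAt G (φ x) (Set.Ici 0) x) (hG0 : G 0 = 0)
    (x : ℝ) (hx : x ∈ Set.Ici (0:ℝ)) : D x = D 0 * Real.exp (-(G x)) := by
  have hconst : ∀ y ∈ Set.Ici (0:ℝ),
      HasDerivWithinAt (fun y => Real.log (D y) + G y) 0 (Set.Ici 0) y := by
    intro y hy
    have hne : D y ≠ 0 := ne_of_gt (hpos y hy)
    have hlog : HasDerivWithinAt (fun y => Real.log (D y)) ((D y)⁻¹ * -(φ y * D y))
        (Set.Ici 0) y := (Real.hasDerivAt_log hne).comp_hasDerivWithinAt y (hD y hy)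
    have := hlog.add (hG y hy)
    convert this using 1
    all_goals try rfl
    rw [mul_neg, mul_comm (φ y) (D y), ← mul_assoc, inv_mul_cancel₀ hne, one_mul]; ring
  have hFx := my_const _ hconst x hx
  rw [hG0, add_zero] at hFx
  have h1 : Real.log (D x) = Real.log (D 0) - G x := by linarith
  have h2 := Real.exp_log (hpos x hx)
  rw [← h2, h1, Real.exp_sub, Real.exp_log (hpos 0 Set.self_mem_Ici), Real.exp_neg]
  ring

theorem stmt11 {d : ℕ}
    (U : Set (EuclideanSpace ℝ (Fin d))) (hUopen : IsOpen U) (hUconn : IsConnected U)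
    (c : ℝ → ℝ) (u : ℝ → EuclideanSpace ℝ (Fin d))
    (hc : ContDiffOn ℝ 2 c (Set.Ici 0)) (hu : ContDiffOn ℝ 2 u (Set.Ici 0))
    (hden : ∀ x : ℝ, 0 ≤ x → ∀ z ∈ U, c x + ⟪z, u x⟫ < 1)
    (h₀ h₁ : ℝ → ℝ)
    (hh₀ : ContinuousOn h₀ (Set.Ici 0)) (hh₁ : ContinuousOn h₁ (Set.Ici 0))
    -- for every t ≥ 0 the function h₀ + t·h₁ belongs to the linear-rational family M
    (hmem : ∀ t : ℝ, 0 ≤ t → ∃ z ∈ U, ∀ x : ℝ, 0 ≤ x →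
      h₀ x + t * h₁ x =
        (derivWithin c (Set.Ici 0) x + ⟪z, derivWithin u (Set.Ici 0) x⟫) /
          (1 - c x - ⟪z, u x⟫)) :
    ∀ x : ℝ, 0 ≤ x → h₁ x = 0 := by
  have hud : UniqueDiffOn ℝ (Set.Ici (0:ℝ)) := uniqueDiffOn_Ici 0
  have hcD : DifferentiableOn ℝ c (Set.Ici 0) := hc.differentiableOn (by norm_num)
  have huD : DifferentiableOn ℝ u (Set.Ici 0) := hu.differentiableOn (by norm_num)
  set H₀ : ℝ → ℝ := fun y => ∫ s in (0:ℝ)..y, h₀ s with hH₀def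
  set H₁ : ℝ → ℝ := fun y => ∫ s in (0:ℝ)..y, h₁ s with hH₁def
  have hH₀ : ∀ x ∈ Set.Ici (0:ℝ), HasDerivWithinAt H₀ (h₀ x) (Set.Ici 0) x := my_ftc h₀ hh₀
  have hH₁ : ∀ x ∈ Set.Ici (0:ℝ), HasDerivWithinAt H₁ (h₁ x) (Set.Ici 0) x := my_ftc h₁ hh₁
  have hH₁c : ContinuousOn H₁ (Set.Ici 0) := fun y hy =>
    ((hH₁ y hy).differentiableWithinAt).continuousWithinAt
  have hH₁0 : H₁ 0 = 0 := intervalIntegral.integral_same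
  -- key identity
  have key : ∀ t : ℝ, 0 ≤ t → ∃ z ∈ U, ∀ x ∈ Set.Ici (0:ℝ),
      1 - c x - ⟪z, u x⟫ = (1 - c 0 - ⟪z, u 0⟫) * Real.exp (-(H₀ x + t * H₁ x)) := by
    intro t ht
    obtain ⟨z, hzU, hz⟩ := hmem t ht
    refine ⟨z, hzU, ?_⟩
    set D : ℝ → ℝ := fun x => 1 - c x - ⟪z, u x⟫ with hDdef
    have hDpos : ∀ x ∈ Set.Ici (0:ℝ), 0 < D x := fun x hx => by
      have := hden x hx z hzU
      simp only [hDdef]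
      linarith
    have hDderiv : ∀ x ∈ Set.Ici (0:ℝ),
        HasDerivWithinAt D (-((h₀ x + t * h₁ x) * D x)) (Set.Ici 0) x := by
      intro x hx
      have hc' : HasDerivWithinAt c (derivWithin c (Set.Ici 0) x) (Set.Ici 0) x :=
        (hcD x hx).hasDerivWithinAt
      have hu' : HasDerivWithinAt u (derivWithin u (Set.Ici 0) x) (Set.Ici 0) x :=
        (huD x hx).hasDerivWithinAt
      have hzc : HasDerivWithinAt (fun _ : ℝ => z) 0 (Set.Ici 0) x :=
        hasDerivWithinAt_const x _ z
      have hinner := hzc.inner ℝ hu'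
      have hD' : HasDerivWithinAt D
          (0 - derivWithin c (Set.Ici 0) x -
            (⟪z, derivWithin u (Set.Ici 0) x⟫ + ⟪(0 : EuclideanSpace ℝ (Fin d)), u x⟫))
          (Set.Ici 0) x :=
        ((hasDerivWithinAt_const x _ (1:ℝ)).sub hc').sub hinner
      have hne : D x ≠ 0 := ne_of_gt (hDpos x hx)
      have heq := hz x hx
      rw [eq_div_iff hne] at heq
      convert hD' using 1
      simp only [inner_zero_left, add_zero]
      linarith
    have := my_ode D (fun x => h₀ x + t * h₁ x) (fun x => H₀ x + t * H₁ x) hDderiv hDpos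
      (fun x hx => (hH₀ x hx).add ((hH₁ x hx).const_mul t))
      (by simp [hH₀def, hH₁def])
    intro x hx
    exact this x hx
  -- choose z i for t = i, i : Fin (d+2)
  have hzc : ∀ i : Fin (d + 2), ∃ z ∈ U, ∀ x ∈ Set.Ici (0:ℝ),
      1 - c x - ⟪z, u x⟫ = (1 - c 0 - ⟪z, u 0⟫) * Real.exp (-(H₀ x + (i:ℕ) * H₁ x)) :=
    fun i => key (i:ℕ) (Nat.cast_nonneg _)
  choose z hzU hzeq using hzc
  set α : Fin (d + 2) → ℝ := fun i => 1 - c 0 - ⟪z i, u 0⟫ with hαdef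
  have hα : ∀ i, 0 < α i := fun i => by
    have := hden 0 le_rfl (z i) (hzU i)
    simp only [hαdef]
    linarith
  -- linear dependence
  have hdep : ¬ LinearIndependent ℝ
      (fun i : Fin (d + 2) => ((z i, (1:ℝ)) : EuclideanSpace ℝ (Fin d) × ℝ)) := by
    intro h
    have := h.fintype_card_le_finrank
    rw [Fintype.card_fin, Module.finrank_prod, finrank_euclideanSpace_fin,
      Module.finrank_self] at this
    omega
  obtain ⟨g, hgsum, i₀, hgi₀⟩ := Fintype.not_linearIndependent_iff.mp hdep
  have hg1 : ∑ i, g i • z i = (0 : EuclideanSpace ℝ (Fin d)) := by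
    have := congrArg Prod.fst hgsum
    simpa [Prod.fst_sum] using this
  have hg2 : ∑ i, g i = 0 := by
    have := congrArg Prod.snd hgsum
    simpa [Prod.snd_sum, smul_eq_mul] using this
  -- H₁ vanishes on Ici 0
  have hH₁zero : ∀ x ∈ Set.Ici (0:ℝ), H₁ x = 0 := by
    by_contra hcon
    push_neg at hcon
    obtain ⟨x₀, hx₀, hne⟩ := hcon
    set r : ℝ → ℝ := fun y => Real.exp (-(H₁ y)) with hrdef
    set P : Polynomial ℝ :=
      ∑ i : Fin (d + 2), Polynomial.C (g i * α i) * Polynomial.X ^ (i:ℕ) with hPdef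
    have hProot : ∀ x ∈ Set.Ici (0:ℝ), P.IsRoot (r x) := by
      intro x hx
      have hsum0 : ∑ i, g i * (1 - c x - ⟪z i, u x⟫) = 0 := by
        have hexp : ∑ i, g i * (1 - c x - ⟪z i, u x⟫)
            = (∑ i, g i) * (1 - c x) - ⟪∑ i, g i • z i, u x⟫ := by
          rw [sum_inner, Finset.sum_mul, ← Finset.sum_sub_distrib]
          refine Finset.sum_congr rfl fun i _ => ?_
          rw [real_inner_smul_left]
          ring
        rw [hexp, hg1, hg2]
        simp
      have hterm : ∀ i : Fin (d + 2), g i * (1 - c x - ⟪z i, u x⟫)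
          = Real.exp (-(H₀ x)) * ((g i * α i) * (r x) ^ (i:ℕ)) := by
        intro i
        rw [hzeq i x hx]
        have : Real.exp (-(H₀ x + (i:ℕ) * H₁ x))
            = Real.exp (-(H₀ x)) * (r x) ^ (i:ℕ) := by
          rw [hrdef]
          rw [← Real.exp_nat_mul, ← Real.exp_add]
          ring_nf
        rw [this, hαdef]
        ring
      rw [Finset.sum_congr rfl (fun i _ => hterm i), ← Finset.mul_sum] at hsum0
      have hexpne : Real.exp (-(H₀ x)) ≠ 0 := Real.exp_ne_zero _
      have hsum0' : ∑ i, (g i * α i) * (r x) ^ (i:ℕ) = 0 :=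
        (mul_eq_zero.mp hsum0).resolve_left hexpne
      simp only [Polynomial.IsRoot, hPdef, Polynomial.eval_finset_sum, Polynomial.eval_mul,
        Polynomial.eval_C, Polynomial.eval_pow, Polynomial.eval_X]
      exact hsum0'
    -- infinitely many roots
    have hr0 : r 0 = 1 := by simp [hrdef, hH₁0]
    have hrx₀ : r x₀ ≠ 1 := by
      intro h
      have h2 : Real.exp (-(H₁ x₀)) = Real.exp 0 := by
        show r x₀ = Real.exp 0
        rw [h, Real.exp_zero]
      exact hne (neg_eq_zero.mp (Real.exp_injective h2))
    have hrc : ContinuousOn r (Set.Icc 0 x₀) :=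
      (Real.continuous_exp.comp_continuousOn (hH₁c.mono Set.Icc_subset_Ici_self).neg)
    have hinf : {y : ℝ | P.IsRoot y}.Infinite := by
      have himage : ∀ y ∈ r '' Set.Icc 0 x₀, P.IsRoot y := by
        rintro y ⟨x, hx, rfl⟩
        exact hProot x (Set.Icc_subset_Ici_self hx)
      rcases lt_or_gt_of_ne hrx₀ with hlt | hgt
      · have hsub := intermediate_value_Icc' hx₀ hrc
        rw [hr0] at hsub
        exact ((Set.Icc_infinite hlt).mono hsub).mono himage
      · have hsub := intermediate_value_Icc hx₀ hrc
        rw [hr0] at hsub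
        exact ((Set.Icc_infinite hgt).mono hsub).mono himage
    have hP0 : P = 0 := Polynomial.eq_zero_of_infinite_isRoot P hinf
    have hcoeff : P.coeff (i₀ : ℕ) = g i₀ * α i₀ := by
      rw [hPdef, Polynomial.finset_sum_coeff]
      have : ∀ i : Fin (d + 2), (Polynomial.C (g i * α i) * Polynomial.X ^ (i:ℕ)).coeff (i₀:ℕ)
          = if i = i₀ then g i * α i else 0 := by
        intro i
        simp only [Polynomial.coeff_C_mul, Polynomial.coeff_X_pow, Fin.val_eq_val]
        by_cases h : i = i₀
        · subst h; simp
        · rw [if_neg (fun hh => h hh.symm), if_neg h, mul_zero]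
      rw [Finset.sum_congr rfl (fun i _ => this i), Finset.sum_ite_eq' Finset.univ i₀]
      simp
    rw [hP0] at hcoeff
    simp only [Polynomial.coeff_zero] at hcoeff
    have := (hα i₀).ne'
    exact hgi₀ (by
      rcases mul_eq_zero.mp hcoeff.symm with h | h
      · exact h
      · exact absurd h this)
  -- conclude h₁ = 0
  intro x hx
  have h2 : HasDerivWithinAt H₁ 0 (Set.Ici 0) x :=
    (hasDerivWithinAt_const x _ (0:ℝ)).congr (fun y hy => hH₁zero y hy) (hH₁zero x hx)
  have e1 := (hH₁ x hx).derivWithin (hud x hx)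
  have e2 := h2.derivWithin (hud x hx)
  rw [e1] at e2
  exact e2
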